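/- Let Z = {z_n} be points in the open unit disc partitioned into sets Z_k, with points λ_k on the unit circle, and set a_k = 2·∑_{z ∈ Z_k} |λ_k - z|²/(1 - |z|²). Then for all ζ on the unit circle, ∑_{z ∈ Z} (1 - |z|²)/|ζ - z|² ≤ ∑_k 2a_k/|ζ - λ_k|². -/

import Mathlib

open scoped ENNReal

lemma key_ineq (w ζ l : ℂ) (hζ : ‖ζ‖ = 1) (hl : ‖l‖ = 1)
    (hw : ‖w‖ < 1) :
    (1 - ‖w‖ ^ 2) * ‖ζ - l‖
      ≤ 2 * (‖l - w‖ * ‖ζ - w‖) := by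
  have hid : ((1 - ‖w‖ ^ 2 : ℝ) : ℂ) * (ζ - l)
      = (ζ - w) * (1 - (starRingEnd ℂ) w * l) - (l - w) * (1 - (starRingEnd ℂ) w * ζ) := by
    have hz2 : ((‖w‖ : ℝ) : ℂ) ^ 2 = w * (starRingEnd ℂ) w := by
      rw [← Complex.ofReal_pow, Complex.sq_norm, Complex.mul_conj]
    push_cast
    rw [hz2]; ring
  have habs1 : ‖1 - (starRingEnd ℂ) w * l‖ = ‖l - w‖ := by
    have h1 : (1 : ℂ) - (starRingEnd ℂ) w * l = (starRingEnd ℂ) (l - w) * l := by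
      have : (starRingEnd ℂ) l * l = 1 := by
        rw [← Complex.normSq_eq_conj_mul_self]
        simp [← Complex.sq_norm, hl]
      rw [map_sub]; ring_nf
      rw [mul_comm l ((starRingEnd ℂ) l), this]; ring
    rw [h1, norm_mul, Complex.norm_conj, hl, mul_one]
  have habs2 : ‖1 - (starRingEnd ℂ) w * ζ‖ = ‖ζ - w‖ := by
    have h1 : (1 : ℂ) - (starRingEnd ℂ) w * ζ = (starRingEnd ℂ) (ζ - w) * ζ := by
      have : (starRingEnd ℂ) ζ * ζ = 1 := by
        rw [← Complex.normSq_eq_conj_mul_self]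
        simp [← Complex.sq_norm, hζ]
      rw [map_sub]; ring_nf
      rw [mul_comm ζ ((starRingEnd ℂ) ζ), this]; ring
    rw [h1, norm_mul, Complex.norm_conj, hζ, mul_one]
  have hnn : (0:ℝ) ≤ 1 - ‖w‖ ^ 2 := by nlinarith [norm_nonneg w]
  calc (1 - ‖w‖ ^ 2) * ‖ζ - l‖
      = ‖((1 - ‖w‖ ^ 2 : ℝ) : ℂ) * (ζ - l)‖ := by
        rw [norm_mul, Complex.norm_real, Real.norm_eq_abs, abs_of_nonneg hnn]
    _ ≤ ‖(ζ - w) * (1 - (starRingEnd ℂ) w * l)‖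
        + ‖(l - w) * (1 - (starRingEnd ℂ) w * ζ)‖ := by
        rw [hid]; exact norm_sub_le _ _
    _ = 2 * (‖l - w‖ * ‖ζ - w‖) := by
        rw [norm_mul, norm_mul, habs1, habs2]; ring

/-- With Z = {zₙ} ⊂ 𝔻 partitioned by p into classes Z_k, λ_k ∈ 𝕋 and
a_k = 2∑_{z ∈ Z_k} |λ_k - z|²/(1-|z|²), one has for all ζ ∈ 𝕋:
∑_{z ∈ Z} (1-|z|²)/|ζ-z|² ≤ ∑_k 2 a_k/|ζ-λ_k|². -/
theorem stmt10 (z : ℕ → ℂ) (hz : ∀ n, ‖z n‖ < 1)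
    (p : ℕ → ℕ) (lam : ℕ → ℂ) (hlam : ∀ k, ‖lam k‖ = 1)
    (a : ℕ → ℝ≥0∞)
    (ha : ∀ k, a k = 2 * ∑' n : {n // p n = k},
      ENNReal.ofReal (‖lam k - z n‖ ^ 2 / (1 - ‖z n‖ ^ 2)))
    (ζ : ℂ) (hζ : ‖ζ‖ = 1) :
    ∑' n, ENNReal.ofReal ((1 - ‖z n‖ ^ 2) / ‖ζ - z n‖ ^ 2) ≤
      ∑' k, 2 * a k / ENNReal.ofReal (‖ζ - lam k‖ ^ 2) := by
  set F : ℕ → ℝ≥0∞ := fun n =>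
    ENNReal.ofReal ((1 - ‖z n‖ ^ 2) / ‖ζ - z n‖ ^ 2) with hF
  have hsplit : ∑' n, F n = ∑' k, ∑' n : {n // p n = k}, F n := by
    rw [← (Equiv.sigmaFiberEquiv p).tsum_eq F]
    exact ENNReal.tsum_sigma (β := fun k => {n // p n = k}) fun k n => F ↑n
  rw [hsplit]
  refine ENNReal.tsum_le_tsum fun k => ?_
  -- fiberwise bound
  set c : ℝ≥0∞ := ENNReal.ofReal (‖ζ - lam k‖ ^ 2) with hc
  set G : {n // p n = k} → ℝ≥0∞ := fun n =>
    ENNReal.ofReal (‖lam k - z n‖ ^ 2 / (1 - ‖z n‖ ^ 2)) with hG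
  have hterm : ∀ n : {n // p n = k}, F n ≤ 4 * G n / c := by
    intro n
    have hGpos : G n ≠ 0 := by
      have hlz : ‖lam k - z ↑n‖ > 0 := by
        have : lam k ≠ z ↑n := fun h => absurd (hlam k) (by rw [h]; exact (hz ↑n).ne)
        simpa [sub_ne_zero] using this
      have hden : (0:ℝ) < 1 - ‖z ↑n‖ ^ 2 := by
        nlinarith [hz ↑n, norm_nonneg (z ↑n)]
      simp only [hG, ne_eq, ENNReal.ofReal_eq_zero, not_le]
      positivity
    rw [ENNReal.le_div_iff_mul_le (Or.inr (by simpa using hGpos))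
      (Or.inl (by simp [hc]))]
    -- F n * c ≤ 4 * G n
    have hzζ : (0:ℝ) < ‖ζ - z ↑n‖ := by
      have : ζ ≠ z ↑n := fun h => absurd hζ (by rw [h]; exact (hz ↑n).ne)
      simpa [sub_ne_zero] using this
    have hden : (0:ℝ) < 1 - ‖z ↑n‖ ^ 2 := by
      nlinarith [hz ↑n, norm_nonneg (z ↑n)]
    have hreal : (1 - ‖z ↑n‖ ^ 2) / ‖ζ - z ↑n‖ ^ 2
        * ‖ζ - lam k‖ ^ 2
        ≤ 4 * (‖lam k - z ↑n‖ ^ 2 / (1 - ‖z ↑n‖ ^ 2)) := by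
      rw [div_mul_eq_mul_div, mul_comm (4:ℝ) _, div_mul_eq_mul_div,
        div_le_div_iff₀ (pow_pos hzζ 2) hden]
      have hk := key_ineq (z ↑n) ζ (lam k) hζ (hlam k) (hz ↑n)
      have hsq := mul_le_mul hk hk
        (mul_nonneg hden.le (norm_nonneg (ζ - lam k)))
        (by positivity)
      nlinarith [hsq]
    calc F ↑n * c = ENNReal.ofReal ((1 - ‖z ↑n‖ ^ 2) / ‖ζ - z ↑n‖ ^ 2
          * ‖ζ - lam k‖ ^ 2) := by
          rw [hF, hc, ENNReal.ofReal_mul (by positivity)]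
      _ ≤ ENNReal.ofReal (4 * (‖lam k - z ↑n‖ ^ 2 / (1 - ‖z ↑n‖ ^ 2))) :=
          ENNReal.ofReal_le_ofReal hreal
      _ = 4 * G n := by
          rw [ENNReal.ofReal_mul (by norm_num)]
          norm_num [hG]
  calc ∑' n : {n // p n = k}, F n ≤ ∑' n : {n // p n = k}, 4 * G n / c :=
        ENNReal.tsum_le_tsum hterm
    _ = (∑' n : {n // p n = k}, 4 * G n) / c := by
        simp only [div_eq_mul_inv]; exact ENNReal.tsum_mul_right
    _ = 2 * a k / c := by
        rw [ha k, ENNReal.tsum_mul_left, ← mul_assoc]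
        norm_num
        rfl
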